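/- Under the pure selection flow, the conditional distributions within the fit and unfit subpopulations are invariant: b(φ_t(ν)) = b(ν) and d(φ_t(ν)) = d(ν) for all t ≥ 0, whenever 0 < f(ν) < 1. -/

import Mathlib

open Finset Real Filter MeasureTheory

noncomputable section

abbrev X (n : ℕ) := Fin n → Bool

def isProb {n : ℕ} (ν : X n → ℝ) : Prop :=
  (∀ x, 0 ≤ ν x) ∧ ∑ x, ν x = 1

def Fsel {n : ℕ} (i0 : Fin n) (ν : X n → ℝ) : X n → ℝ :=
  fun x => if x i0 = false then ν x else 0

def fsel {n : ℕ} (i0 : Fin n) (ν : X n → ℝ) : ℝ := ∑ x, Fsel i0 ν x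

def phi {n : ℕ} (s : ℝ) (i0 : Fin n) (t : ℝ) (ν : X n → ℝ) : X n → ℝ :=
  fun x => (Real.exp (s * t) * Fsel i0 ν x + (ν x - Fsel i0 ν x)) /
    (Real.exp (s * t) * fsel i0 ν + 1 - fsel i0 ν)

/-- marginal of `ν` with respect to the coordinates in `A`, evaluated at (the
restriction to `A` of) `y`. -/
def marg {n : ℕ} (A : Finset (Fin n)) (ν : X n → ℝ) (y : X n) : ℝ :=
  ∑ x, if ∀ i ∈ A, x i = y i then ν x else 0

/-- the `i`-tail `D_i = {j : i• ≤ i ≤ j or i• ≥ i ≥ j}`. -/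
def Dtail {n : ℕ} (i0 i : Fin n) : Finset (Fin n) :=
  univ.filter (fun j => (i0 ≤ i ∧ i ≤ j) ∨ (i ≤ i0 ∧ j ≤ i))

/-- the `i`-head `C_i`, the complement of the tail. -/
def Chead {n : ℕ} (i0 i : Fin n) : Finset (Fin n) := univ \ Dtail i0 i

/-- Euler step of the pure selection equation. -/
def Tsel {n : ℕ} (s h : ℝ) (i0 : Fin n) (ν : X n → ℝ) : X n → ℝ :=
  fun x => ν x + h * s * (Fsel i0 ν x - fsel i0 ν * ν x)

/-- conditional type distribution within the fit subpopulation. -/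
def bdist {n : ℕ} (i0 : Fin n) (ν : X n → ℝ) : X n → ℝ :=
  fun x => Fsel i0 ν x / fsel i0 ν

/-- conditional type distribution within the unfit subpopulation. -/
def ddist {n : ℕ} (i0 : Fin n) (ν : X n → ℝ) : X n → ℝ :=
  fun x => (ν x - Fsel i0 ν x) / (1 - fsel i0 ν)

/-- Under the pure selection flow, the conditional distributions within the fit
and unfit subpopulations are invariant. -/
theorem stmt_14 {n : ℕ} (i0 : Fin n) (s : ℝ) (hs : 0 < s)
    (ν : X n → ℝ) (hν : isProb ν)
    (h0 : 0 < fsel i0 ν) (h1 : fsel i0 ν < 1) :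
    ∀ t : ℝ, 0 ≤ t →
      bdist i0 (phi s i0 t ν) = bdist i0 ν ∧ ddist i0 (phi s i0 t ν) = ddist i0 ν := by
  intro t ht
  set E := Real.exp (s * t) with hE
  have hE1 : (1:ℝ) ≤ E := by
    rw [hE]; exact Real.one_le_exp (mul_nonneg hs.le ht)
  set f := fsel i0 ν with hf
  set D := E * f + 1 - f with hD
  have hDpos : 0 < D := by nlinarith
  have hFphi : Fsel i0 (phi s i0 t ν) = fun x => E * Fsel i0 ν x / D := by
    funext x
    by_cases hx : x i0 = false
    · simp only [Fsel, phi, hx, if_true, ← hf, ← hD, ← hE]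
      ring_nf
    · simp [Fsel, hx]
  have hfphi : fsel i0 (phi s i0 t ν) = E * f / D := by
    rw [fsel, hFphi]
    rw [← Finset.sum_div, ← Finset.mul_sum]
    rfl
  have hnum : ∀ x, phi s i0 t ν x - Fsel i0 (phi s i0 t ν) x = (ν x - Fsel i0 ν x) / D := by
    intro x
    rw [hFphi]
    simp only [phi, ← hf, ← hD, ← hE]
    ring
  constructor
  · funext x
    rw [bdist, bdist, hFphi, hfphi]
    field_simp
    rw [← hf, mul_div_cancel_right₀ _ (ne_of_gt h0)]
  · funext x
    rw [ddist, ddist, hnum, hfphi]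
    have h2 : 1 - E * f / D = (1 - f) / D := by
      field_simp
      rw [hD]; ring
    rw [h2, div_div_div_eq, ← hf]
    rw [mul_comm D (1-f), mul_div_mul_right _ _ (ne_of_gt hDpos)]
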